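/- arXiv:1707.07461 — 2 statements merged into one kernel-verified Lean document; each statement's English description precedes it below -/
import Mathlib

section
/- Let f : ℝ → ℝ be continuous with |f(x)| ≤ a·cosh(b·x) for all x (a > 0, b ∈ ℝ), let λ > 0, and let ρ be a compactly supported probability measure on ℝ. For a function g : ℝ → ℝ define F^g(x) = Σ_{n=0}^∞ (e^{−λ} λ^n / (n+1)!) · ∫ g d(δ_x ∗ ρ^{∗n}) and G^g = Σ_{n=0}^∞ (e^{−λ} λ^n / (n+1)!) · ∫ g d(ρ^{∗(n+1)}). Then there exists a sequence (p_k) of real trigonometric polynomials such that sup_{x ∈ supp ρ} |F^{p_k}(x) − F^f(x)| → 0 and G^{p_k} → G^f as k → ∞. -/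
open MeasureTheory Filter

/-- The `n`-fold convolution power of a measure on `ℝ`, with `ρ^{∗0} = δ₀`. -/
noncomputable def convPow (ρ : Measure ℝ) : ℕ → Measure ℝ
  | 0 => Measure.dirac 0
  | n + 1 => (convPow ρ n).conv ρ

/-- The topological support of a measure on `ℝ`. -/
def msupp (μ : Measure ℝ) : Set ℝ := {x | ∀ U ∈ nhds x, μ U ≠ 0}

/-- A real trigonometric polynomial of some period `T > 0`: a finite real linear
combination of `1`, `cos(2πkx/T)` and `sin(2πkx/T)`. -/
def IsTrigPoly (p : ℝ → ℝ) : Prop :=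
  ∃ (T : ℝ) (m : ℕ) (c s : ℕ → ℝ), 0 < T ∧
    ∀ x, p x = c 0 + ∑ k ∈ Finset.Icc 1 m,
      (c k * Real.cos (2 * Real.pi * k * x / T) +
       s k * Real.sin (2 * Real.pi * k * x / T))

/-- `F^g(x) = Σ_{n=0}^∞ (e^{−λ} λ^n / (n+1)!) · ∫ g d(δ_x ∗ ρ^{∗n})`. -/
noncomputable def meanFitnessAt (g : ℝ → ℝ) (l : ℝ) (ρ : Measure ℝ) (x : ℝ) : ℝ :=
  ∑' n : ℕ, Real.exp (-l) * l ^ n / (n + 1).factorial *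
    ∫ y, g y ∂((Measure.dirac x).conv (convPow ρ n))

/-- `G^g = Σ_{n=0}^∞ (e^{−λ} λ^n / (n+1)!) · ∫ g d(ρ^{∗(n+1)})`. -/
noncomputable def meanFitness (g : ℝ → ℝ) (l : ℝ) (ρ : Measure ℝ) : ℝ :=
  ∑' n : ℕ, Real.exp (-l) * l ^ n / (n + 1).factorial *
    ∫ y, g y ∂(convPow ρ (n + 1))

section Aux

open Set Complex

lemma sum_int_Icc (g : ℤ → ℝ) (m : ℕ) :
    ∑ n ∈ Finset.Icc (-(m : ℤ)) (m : ℤ), g n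
      = g 0 + ∑ k ∈ Finset.Icc 1 m, (g k + g (-(k : ℤ))) := by
  induction m with
  | zero => simp
  | succ m ih =>
    have h1 : Finset.Icc (-((m : ℤ) + 1)) ((m : ℤ) + 1)
        = insert (-((m : ℤ) + 1)) (insert ((m : ℤ) + 1) (Finset.Icc (-(m : ℤ)) (m : ℤ))) := by
      ext n
      simp only [Finset.mem_Icc, Finset.mem_insert]
      omega
    have h2 : (-((m : ℤ) + 1)) ∉ insert ((m : ℤ) + 1) (Finset.Icc (-(m : ℤ)) (m : ℤ)) := by
      simp only [Finset.mem_insert, Finset.mem_Icc]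
      omega
    have h3 : ((m : ℤ) + 1) ∉ Finset.Icc (-(m : ℤ)) (m : ℤ) := by
      simp only [Finset.mem_Icc]; omega
    have h4 : ∑ k ∈ Finset.Icc 1 (m + 1), (g k + g (-(k : ℤ)))
        = (∑ k ∈ Finset.Icc 1 m, (g k + g (-(k : ℤ))))
          + (g (m + 1 : ℕ) + g (-((m + 1 : ℕ) : ℤ))) :=
      Finset.sum_Icc_succ_top (by omega) _
    push_cast at *
    rw [h1, Finset.sum_insert h2, Finset.sum_insert h3, h4, ih]
    ring

lemma exists_trig_approx (f : ℝ → ℝ) (hf : Continuous f) (R C ε : ℝ)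
    (hR : 0 < R) (hε : 0 < ε) (hC : ∀ x ∈ Set.Icc (-R) R, |f x| ≤ C) :
    ∃ p : ℝ → ℝ, IsTrigPoly p ∧ (∀ x ∈ Set.Icc (-R) R, |p x - f x| ≤ ε) ∧
      (∀ x, |p x| ≤ C + ε) := by
  have hC0 : 0 ≤ C := le_trans (abs_nonneg _) (hC 0 ⟨by linarith, by linarith⟩)
  set T : ℝ := 2 * R + 2 with hTdef
  have hT : 0 < T := by positivity
  haveI : Fact (0 < T) := ⟨hT⟩
  set F₀ : ℝ → ℝ := fun x => if x ≤ R then f x else f R + (x - R) / 2 * (f (-R) - f R)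
    with hF₀def
  have hF₀cont : Continuous F₀ := by
    apply Continuous.if_le hf (by fun_prop) continuous_id continuous_const
    intro x hx
    simp only [id_eq] at hx
    subst hx
    simp
  have hend : F₀ (-R) = F₀ (-R + T) := by
    have h1 : (-R : ℝ) ≤ R := by linarith
    have h2 : ¬ (-R + T ≤ R) := by simp only [hTdef]; intro h; linarith
    have h2' : ¬ (-R + (2 * R + 2) ≤ R) := by intro h; linarith
    simp only [hF₀def, if_pos h1, if_neg h2, hTdef, if_neg h2']
    rw [show (-R + (2 * R + 2) - R) / 2 = 1 by ring]
    ring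
  have hF₀bound : ∀ x ∈ Set.Icc (-R) (-R + T), |F₀ x| ≤ C := by
    intro x hx
    by_cases h : x ≤ R
    · simpa [hF₀def, if_pos h] using hC x ⟨hx.1, h⟩
    · push_neg at h
      have hx2 : x ≤ R + 2 := by have := hx.2; simp only [hTdef] at this; linarith
      set t : ℝ := (x - R) / 2 with ht
      have ht0 : 0 ≤ t := by simp only [ht]; linarith
      have ht1 : t ≤ 1 := by simp only [ht]; linarith
      have hfR : |f R| ≤ C := hC R ⟨by linarith, le_refl R⟩
      have hfmR : |f (-R)| ≤ C := hC (-R) ⟨le_refl _, by linarith⟩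
      have : F₀ x = (1 - t) * f R + t * f (-R) := by
        simp only [hF₀def, if_neg (not_le.mpr h), ht]; ring
      rw [this]
      calc |(1 - t) * f R + t * f (-R)| ≤ |(1 - t) * f R| + |t * f (-R)| := abs_add_le _ _
        _ = (1 - t) * |f R| + t * |f (-R)| := by
            rw [abs_mul, abs_mul, _root_.abs_of_nonneg (show (0:ℝ) ≤ 1 - t by linarith),
              _root_.abs_of_nonneg ht0]
        _ ≤ (1 - t) * C + t * C := by
            apply add_le_add <;> apply mul_le_mul_of_nonneg_left <;>
              first | assumption | linarith
        _ = C := by ring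
  set H : AddCircle T → ℝ := AddCircle.liftIco T (-R) F₀ with hHdef
  have hHcont : Continuous H := AddCircle.liftIco_continuous hend hF₀cont.continuousOn
  have hHbound : ∀ z, |H z| ≤ C := by
    intro z
    have : H z = F₀ ((AddCircle.equivIco T (-R) z : ℝ)) := rfl
    rw [this]
    exact hF₀bound _ (Ico_subset_Icc_self (AddCircle.equivIco T (-R) z).2)
  have hHeq : ∀ x ∈ Set.Icc (-R) R, H (x : AddCircle T) = f x := by
    intro x hx
    have hx' : x ∈ Set.Ico (-R) (-R + T) := ⟨hx.1, by simp only [hTdef]; linarith [hx.2]⟩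
    have := AddCircle.liftIco_coe_apply (f := F₀) hx'
    rw [hHdef, this, hF₀def]
    simp [hx.2]
  set G : C(AddCircle T, ℂ) := ⟨fun z => (H z : ℂ), Complex.continuous_ofReal.comp hHcont⟩
    with hGdef
  have hmem : G ∈ closure ((Submodule.span ℂ (Set.range (@fourier T))) : Set C(AddCircle T, ℂ)) := by
    rw [← Submodule.topologicalClosure_coe, span_fourier_closure_eq_top]
    trivial
  obtain ⟨q, hq_mem, hq_dist⟩ := Metric.mem_closure_iff.mp hmem ε hε
  obtain ⟨c, hc⟩ := Finsupp.mem_span_range_iff_exists_finsupp.mp hq_mem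
  set m : ℕ := c.support.sup (fun n => n.natAbs) with hm
  set p : ℝ → ℝ := fun x => (q (x : AddCircle T)).re with hp
  have happly : ∀ x : ℝ, q (x : AddCircle T)
      = ∑ n ∈ c.support, c n * Complex.exp (2 * Real.pi * Complex.I * n * x / T) := by
    intro x
    rw [← hc, Finsupp.sum]
    simp only [ContinuousMap.sum_apply, ContinuousMap.smul_apply, smul_eq_mul]
    refine Finset.sum_congr rfl fun n _ => ?_
    rw [fourier_coe_apply]
  have hdist_pt : ∀ x : ℝ, |p x - H (x : AddCircle T)| ≤ ε := by
    intro x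
    have h1 : dist (G (x : AddCircle T)) (q (x : AddCircle T)) ≤ dist G q :=
      ContinuousMap.dist_apply_le_dist _
    have h2 : |p x - H (x : AddCircle T)|
        ≤ ‖q (x : AddCircle T) - G (x : AddCircle T)‖ := by
      have h3 := Complex.abs_re_le_norm (q (x : AddCircle T) - G (x : AddCircle T))
      have h4 : (G (x : AddCircle T)).re = H (x : AddCircle T) := by
        simp [hGdef]
      rw [Complex.sub_re, h4] at h3
      exact h3
    have h5 : ‖q (x : AddCircle T) - G (x : AddCircle T)‖
        = dist (G (x : AddCircle T)) (q (x : AddCircle T)) := by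
      rw [Complex.dist_eq, norm_sub_rev]
    rw [h5] at h2
    linarith
  refine ⟨p, ?_, ?_, ?_⟩
  · refine ⟨T, m, (fun k => if k = 0 then (c 0).re else (c (k : ℤ)).re + (c (-(k : ℤ))).re),
      (fun k => (c (-(k : ℤ))).im - (c (k : ℤ)).im), hT, ?_⟩
    intro x
    set g : ℤ → ℝ := fun n => (c n * Complex.exp (2 * Real.pi * Complex.I * n * x / T)).re with hg
    have hgen : ∀ n : ℤ, g n = (c n).re * Real.cos (2 * Real.pi * n * x / T)
        - (c n).im * Real.sin (2 * Real.pi * n * x / T) := by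
      intro n
      have harg : (2 * (Real.pi : ℂ) * Complex.I * (n : ℂ) * (x : ℂ) / (T : ℂ))
          = ((2 * Real.pi * n * x / T : ℝ) : ℂ) * Complex.I := by
        push_cast; ring
      simp only [hg, harg]
      rw [Complex.mul_re, Complex.exp_ofReal_mul_I_re, Complex.exp_ofReal_mul_I_im]
    have h0 : p x = ∑ n ∈ c.support, g n := by
      rw [show p x = (q (x : AddCircle T)).re from rfl, happly x, Complex.re_sum]
    have hsub : c.support ⊆ Finset.Icc (-(m : ℤ)) (m : ℤ) := by
      intro n hn
      have : n.natAbs ≤ m := Finset.le_sup (f := fun n => n.natAbs) hn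
      simp only [Finset.mem_Icc]
      omega
    have h1 : ∑ n ∈ c.support, g n = ∑ n ∈ Finset.Icc (-(m : ℤ)) (m : ℤ), g n := by
      refine Finset.sum_subset hsub fun n _ hn => ?_
      simp [hg, Finsupp.notMem_support_iff.mp hn]
    rw [h0, h1, sum_int_Icc g m]
    have hg0 : g 0 = (c 0).re := by
      simp [hg]
    rw [hg0]
    refine congrArg₂ (· + ·) (by simp) (Finset.sum_congr rfl fun k hk => ?_)
    have hk1 : 1 ≤ k := (Finset.mem_Icc.mp hk).1
    have hkne : k ≠ 0 := by omega
    simp only [if_neg hkne]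
    rw [hgen (k : ℤ), hgen (-(k : ℤ))]
    push_cast
    rw [show 2 * Real.pi * -(k:ℝ) * x / T = -(2 * Real.pi * (k:ℝ) * x / T) by ring,
      Real.cos_neg, Real.sin_neg]
    ring
  · intro x hx
    have := hdist_pt x
    rw [hHeq x hx] at this
    exact this
  · intro x
    have h1 := hdist_pt x
    have h2 := hHbound (x : AddCircle T)
    calc |p x| = |(p x - H (x : AddCircle T)) + H (x : AddCircle T)| := by ring_nf
      _ ≤ |p x - H (x : AddCircle T)| + |H (x : AddCircle T)| := abs_add_le _ _
      _ ≤ ε + C := add_le_add h1 h2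
      _ = C + ε := by ring

lemma IsTrigPoly.continuous {p : ℝ → ℝ} (hp : IsTrigPoly p) : Continuous p := by
  obtain ⟨T, m, c, s, hT, hrepr⟩ := hp
  have : p = fun x => c 0 + ∑ k ∈ Finset.Icc 1 m,
      (c k * Real.cos (2 * Real.pi * k * x / T) +
       s k * Real.sin (2 * Real.pi * k * x / T)) := funext hrepr
  rw [this]
  fun_prop

lemma convPow_isProb (ρ : Measure ℝ) (hρ : IsProbabilityMeasure ρ) (n : ℕ) :
    IsProbabilityMeasure (convPow ρ n) := by
  induction n with
  | zero => exact Measure.dirac.isProbabilityMeasure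
  | succ n ih =>
    haveI := ih
    exact Measure.probabilitymeasure_of_probabilitymeasures_conv _ _

lemma conv_null {μ ν : Measure ℝ} [SFinite μ] [SFinite ν] {A B S : Set ℝ}
    (hA : μ Aᶜ = 0) (hB : ν Bᶜ = 0) (hS : MeasurableSet S)
    (h : ∀ x ∈ A, ∀ y ∈ B, x + y ∈ S) : (μ.conv ν) Sᶜ = 0 := by
  have hmap : (μ.conv ν) Sᶜ = (μ.prod ν) ((fun p : ℝ × ℝ => p.1 + p.2) ⁻¹' Sᶜ) :=
    Measure.map_apply (by fun_prop) hS.compl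
  rw [hmap]
  have hsub : ((fun p : ℝ × ℝ => p.1 + p.2) ⁻¹' Sᶜ) ⊆ (Aᶜ ×ˢ univ) ∪ (univ ×ˢ Bᶜ) := by
    intro q hq
    by_contra hcon
    simp only [mem_union, mem_prod, mem_compl_iff, mem_univ, and_true, true_and, not_or,
      not_not] at hcon
    exact hq (h q.1 hcon.1 q.2 hcon.2)
  refine le_antisymm (le_trans (measure_mono hsub) ?_) zero_le
  refine le_trans (measure_union_le _ _) ?_
  rw [Measure.prod_prod, Measure.prod_prod, hA, hB]
  simp

lemma convPow_null (ρ : Measure ℝ) (hρ : IsProbabilityMeasure ρ) (M : ℝ)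
    (h : ρ (Icc (-M) M)ᶜ = 0) (n : ℕ) :
    (convPow ρ n) (Icc (-((n : ℝ) * M)) ((n : ℝ) * M))ᶜ = 0 := by
  induction n with
  | zero =>
    show (Measure.dirac 0) (Icc (-(((0 : ℕ) : ℝ) * M)) (((0 : ℕ) : ℝ) * M))ᶜ = 0
    rw [Measure.dirac_apply' _ measurableSet_Icc.compl]
    have h0 : (0 : ℝ) ∈ Icc (-(((0 : ℕ) : ℝ) * M)) (((0 : ℕ) : ℝ) * M) := by
      simp
    simp only [Set.indicator_apply]
    rw [if_neg (by simpa using h0)]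
  | succ n ih =>
    haveI := convPow_isProb ρ hρ n
    show ((convPow ρ n).conv ρ) _ = 0
    have hcast : (((n + 1 : ℕ) : ℝ)) = (n : ℝ) + 1 := by push_cast; ring
    refine conv_null ih h measurableSet_Icc ?_
    intro x hx y hy
    simp only [mem_Icc] at hx hy ⊢
    constructor
    · push_cast
      nlinarith [hx.1, hy.1]
    · push_cast
      nlinarith [hx.2, hy.2]

lemma abs_integral_le (μ : Measure ℝ) [IsProbabilityMeasure μ] {S : Set ℝ} (hS : μ Sᶜ = 0)
    {g : ℝ → ℝ} (hg : Continuous g) {C : ℝ} (hC : ∀ y ∈ S, |g y| ≤ C) :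
    |∫ y, g y ∂μ| ≤ C := by
  have hae : ∀ᵐ y ∂μ, ‖g y‖ ≤ C := by
    have h1 : ∀ᵐ y ∂μ, y ∈ S := by
      rw [MeasureTheory.ae_iff]
      exact hS
    filter_upwards [h1] with y hy
    simpa [Real.norm_eq_abs] using hC y hy
  have := MeasureTheory.norm_integral_le_of_norm_le_const hae (f := g)
  simpa [Real.norm_eq_abs] using this

lemma integrable_of_suppBound (μ : Measure ℝ) [IsProbabilityMeasure μ] {S : Set ℝ} (hS : μ Sᶜ = 0)
    {g : ℝ → ℝ} (hg : Continuous g) {C : ℝ} (hC : ∀ y ∈ S, |g y| ≤ C) :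
    Integrable g μ := by
  have hae : ∀ᵐ y ∂μ, ‖g y‖ ≤ C := by
    have h1 : ∀ᵐ y ∂μ, y ∈ S := by
      rw [MeasureTheory.ae_iff]
      exact hS
    filter_upwards [h1] with y hy
    simpa [Real.norm_eq_abs] using hC y hy
  exact (integrable_const C).mono' hg.aestronglyMeasurable hae

lemma integral_diff_bound (μ : Measure ℝ) [IsProbabilityMeasure μ] {S : Set ℝ} (hS : μ Sᶜ = 0)
    {g h : ℝ → ℝ} (hg : Continuous g) (hh : Continuous h) {Cg Ch D : ℝ}
    (hCg : ∀ y ∈ S, |g y| ≤ Cg) (hCh : ∀ y ∈ S, |h y| ≤ Ch)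
    (hD : ∀ y ∈ S, |g y - h y| ≤ D) :
    |(∫ y, g y ∂μ) - ∫ y, h y ∂μ| ≤ D := by
  rw [← integral_sub (integrable_of_suppBound μ hS hg hCg) (integrable_of_suppBound μ hS hh hCh)]
  exact abs_integral_le μ hS (hg.sub hh) hD

lemma series_bound (u v c e : ℕ → ℝ) (k : ℕ) (ε : ℝ)
    (he : ∀ n, 0 ≤ e n) (hcs : Summable c) (hes : Summable e)
    (hu : Summable u) (hv : Summable v)
    (hb : ∀ n, |u n - v n| ≤ ε * c n + (if n ≤ k then 0 else e n)) :
    |(∑' n, u n) - ∑' n, v n| ≤ ε * (∑' n, c n) + ∑' j, e (j + (k + 1)) := by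
  have hif : Summable (fun n => if n ≤ k then (0:ℝ) else e n) :=
    Summable.of_nonneg_of_le
      (fun n => by by_cases h : n ≤ k <;> simp [h, he n])
      (fun n => by by_cases h : n ≤ k <;> simp [h, he n]) hes
  have hB : Summable (fun n => ε * c n + if n ≤ k then (0:ℝ) else e n) := (hcs.mul_left ε).add hif
  have habs : Summable (fun n => |u n - v n|) :=
    Summable.of_nonneg_of_le (fun n => abs_nonneg _) hb hB
  have h1 : (∑' n, u n) - ∑' n, v n = ∑' n, (u n - v n) := (Summable.tsum_sub hu hv).symm
  have h2 : |∑' n, (u n - v n)| ≤ ∑' n, |u n - v n| := by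
    have := norm_tsum_le_tsum_norm (f := fun n => u n - v n)
      (by simpa [Real.norm_eq_abs] using habs)
    simpa [Real.norm_eq_abs] using this
  have h3 : ∑' n, |u n - v n| ≤ ∑' n, (ε * c n + if n ≤ k then (0:ℝ) else e n) :=
    Summable.tsum_le_tsum hb habs hB
  have h4 : ∑' n, (ε * c n + if n ≤ k then (0:ℝ) else e n)
      = ε * (∑' n, c n) + ∑' n, (if n ≤ k then (0:ℝ) else e n) := by
    rw [Summable.tsum_add (hcs.mul_left ε) hif, tsum_mul_left]
  have h5 : ∑' n, (if n ≤ k then (0:ℝ) else e n) = ∑' j, e (j + (k + 1)) := by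
    rw [← Summable.sum_add_tsum_nat_add (k + 1) hif]
    have hz : ∑ i ∈ Finset.range (k + 1), (if i ≤ k then (0:ℝ) else e i) = 0 := by
      refine Finset.sum_eq_zero fun i hi => ?_
      have : i ≤ k := by have := Finset.mem_range.mp hi; omega
      simp [this]
    rw [hz, zero_add]
    refine tsum_congr fun j => ?_
    have : ¬ (j + (k + 1) ≤ k) := by omega
    simp [this]
  rw [h1]
  refine le_trans h2 (le_trans h3 ?_)
  rw [h4, h5]

lemma cosh_le_exp_abs (x : ℝ) : Real.cosh x ≤ Real.exp |x| := by
  rw [← Real.cosh_abs, Real.cosh_eq]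
  have h1 : Real.exp (-|x|) ≤ Real.exp |x| := Real.exp_le_exp.mpr (by linarith [abs_nonneg x])
  linarith

end Aux

theorem fourier_approximation_of_fitness
    (f : ℝ → ℝ) (hf : Continuous f)
    (a b : ℝ) (ha : 0 < a)
    (hbound : ∀ x, |f x| ≤ a * Real.cosh (b * x))
    (l : ℝ) (hl : 0 < l)
    (ρ : Measure ℝ) (hρ : IsProbabilityMeasure ρ)
    (K : Set ℝ) (hK : IsCompact K) (hsupp : ρ Kᶜ = 0) :
    ∃ p : ℕ → (ℝ → ℝ),
      (∀ k, IsTrigPoly (p k)) ∧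
      TendstoUniformlyOn (fun k x => meanFitnessAt (p k) l ρ x)
        (meanFitnessAt f l ρ) atTop (msupp ρ) ∧
      Tendsto (fun k => meanFitness (p k) l ρ) atTop
        (nhds (meanFitness f l ρ)) := by
  obtain ⟨r, hr⟩ := hK.isBounded.subset_closedBall 0
  set M : ℝ := max r 1 with hMdef
  have hM1 : (1:ℝ) ≤ M := le_max_right r 1
  have hM : 0 < M := lt_of_lt_of_le one_pos hM1
  have hKM : K ⊆ Set.Icc (-M) M := by
    intro x hx
    have h1 := hr hx
    rw [Real.closedBall_eq_Icc] at h1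
    simp only [zero_sub, zero_add] at h1
    exact ⟨le_trans (neg_le_neg (le_max_left r 1)) h1.1, le_trans h1.2 (le_max_left r 1)⟩
  have hρIcc : ρ (Set.Icc (-M) M)ᶜ = 0 :=
    measure_mono_null (Set.compl_subset_compl.mpr hKM) hsupp
  have hmsupp : msupp ρ ⊆ Set.Icc (-M) M := by
    intro x hx
    by_contra hxK
    exact hx _ ((isClosed_Icc.isOpen_compl).mem_nhds hxK) hρIcc
  set c : ℕ → ℝ := fun n => Real.exp (-l) * l ^ n / (n + 1).factorial with hcdef
  set A : ℕ → ℝ := fun n => a * Real.cosh (|b| * (((n:ℝ) + 1) * M)) with hAdef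
  set e : ℕ → ℝ := fun n => c n * (2 * A n + 1) with hedef
  have hMk : ∀ n : ℕ, (0:ℝ) ≤ ((n:ℝ) + 1) * M :=
    fun n => mul_nonneg (by positivity) hM.le
  have hc0 : ∀ n, 0 ≤ c n := fun n => by
    simp only [hcdef]
    exact div_nonneg (mul_nonneg (Real.exp_nonneg _) (pow_nonneg hl.le n)) (Nat.cast_nonneg _)
  have hA0 : ∀ n, 0 ≤ A n := fun n => by
    simp only [hAdef]
    exact mul_nonneg ha.le (Real.cosh_pos _).le
  have he0 : ∀ n, 0 ≤ e n := fun n => by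
    simp only [hedef]
    exact mul_nonneg (hc0 n) (by linarith [hA0 n])
  have hAmono : ∀ k n : ℕ, k ≤ n → A k ≤ A n := by
    intro k n hkn
    simp only [hAdef]
    refine mul_le_mul_of_nonneg_left ?_ ha.le
    rw [Real.cosh_le_cosh, abs_of_nonneg (mul_nonneg (abs_nonneg b) (hMk k)),
      abs_of_nonneg (mul_nonneg (abs_nonneg b) (hMk n))]
    refine mul_le_mul_of_nonneg_left ?_ (abs_nonneg b)
    refine mul_le_mul_of_nonneg_right ?_ hM.le
    have : (k:ℝ) ≤ n := Nat.cast_le.mpr hkn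
    linarith
  have hfA : ∀ n : ℕ, ∀ y ∈ Set.Icc (-(((n:ℝ) + 1) * M)) (((n:ℝ) + 1) * M), |f y| ≤ A n := by
    intro n y hy
    refine le_trans (hbound y) ?_
    simp only [hAdef]
    refine mul_le_mul_of_nonneg_left ?_ ha.le
    rw [Real.cosh_le_cosh, abs_mul,
      abs_of_nonneg (mul_nonneg (abs_nonneg b) (hMk n))]
    refine mul_le_mul_of_nonneg_left ?_ (abs_nonneg b)
    rw [abs_le]
    exact hy
  have hcs : Summable c := by
    refine Summable.of_nonneg_of_le hc0 (fun n => ?_)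
      ((Real.summable_pow_div_factorial l).mul_left (Real.exp (-l)))
    simp only [hcdef]
    calc Real.exp (-l) * l ^ n / ((n + 1).factorial : ℝ)
        ≤ Real.exp (-l) * l ^ n / (n.factorial : ℝ) := by
          gcongr
          exact Nat.le_succ n
      _ = Real.exp (-l) * (l ^ n / (n.factorial : ℝ)) := by ring
  have hcAs : Summable (fun n => c n * A n) := by
    refine Summable.of_nonneg_of_le (fun n => mul_nonneg (hc0 n) (hA0 n)) (fun n => ?_)
      ((Real.summable_pow_div_factorial (l * Real.exp (|b| * M))).mul_left
        (Real.exp (-l) * a * Real.exp (|b| * M)))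
    have hcosh : Real.cosh (|b| * (((n:ℝ) + 1) * M)) ≤ Real.exp (|b| * M) ^ (n + 1) := by
      refine le_trans (cosh_le_exp_abs _) ?_
      rw [abs_of_nonneg (mul_nonneg (abs_nonneg b) (hMk n)),
        show |b| * (((n:ℝ) + 1) * M) = ((n+1 : ℕ) : ℝ) * (|b| * M) by push_cast; ring,
        Real.exp_nat_mul]
    calc c n * A n ≤ c n * (a * Real.exp (|b| * M) ^ (n + 1)) := by
          refine mul_le_mul_of_nonneg_left ?_ (hc0 n)
          simp only [hAdef]
          exact mul_le_mul_of_nonneg_left hcosh ha.le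
      _ ≤ (Real.exp (-l) * l ^ n / n.factorial) * (a * Real.exp (|b| * M) ^ (n + 1)) := by
          refine mul_le_mul_of_nonneg_right ?_
            (mul_nonneg ha.le (pow_nonneg (Real.exp_nonneg _) _))
          simp only [hcdef]
          gcongr
          exact Nat.le_succ n
      _ = (Real.exp (-l) * a * Real.exp (|b| * M))
            * ((l * Real.exp (|b| * M)) ^ n / n.factorial) := by
          rw [mul_pow, pow_succ]
          ring
  have hes : Summable e := by
    have heq : e = fun n => 2 * (c n * A n) + c n := by
      funext n; simp only [hedef]; ring
    rw [heq]
    exact (hcAs.mul_left 2).add hcs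
  have hex : ∀ k : ℕ, ∃ q : ℝ → ℝ, IsTrigPoly q ∧
      (∀ x ∈ Set.Icc (-(((k:ℝ) + 1) * M)) (((k:ℝ) + 1) * M), |q x - f x| ≤ 1 / ((k:ℝ) + 1)) ∧
      (∀ x, |q x| ≤ A k + 1 / ((k:ℝ) + 1)) := by
    intro k
    exact exists_trig_approx f hf (((k:ℝ) + 1) * M) (A k) (1 / ((k:ℝ) + 1))
      (mul_pos (by positivity) hM) (by positivity) (hfA k)
  choose p htrig happ hbnd using hex
  have hpbound : ∀ k x, |p k x| ≤ A k + 1 := by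
    intro k x
    refine le_trans (hbnd k x) ?_
    have h1 : 1 / ((k:ℝ) + 1) ≤ 1 := by
      rw [div_le_one (by positivity)]
      linarith [Nat.cast_nonneg (α := ℝ) k]
    linarith
  have hconvnull : ∀ n : ℕ, (convPow ρ n) (Set.Icc (-((n:ℝ) * M)) ((n:ℝ) * M))ᶜ = 0 :=
    convPow_null ρ hρ M hρIcc
  have hSnull : ∀ (n : ℕ), ∀ x ∈ msupp ρ,
      ((Measure.dirac x).conv (convPow ρ n))
        (Set.Icc (-(((n:ℝ)+1) * M)) (((n:ℝ)+1) * M))ᶜ = 0 := by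
    intro n x hx
    haveI := convPow_isProb ρ hρ n
    have hdx : (Measure.dirac x) (Set.Icc (-M) M)ᶜ = 0 := by
      rw [Measure.dirac_apply' _ measurableSet_Icc.compl]
      simp only [Set.indicator_apply]
      rw [if_neg (by simpa using hmsupp hx)]
    refine conv_null hdx (hconvnull n) measurableSet_Icc ?_
    intro u hu y hy
    simp only [Set.mem_Icc] at hu hy ⊢
    constructor <;> nlinarith [hu.1, hu.2, hy.1, hy.2]
  have hGnull : ∀ n : ℕ,
      (convPow ρ (n+1)) (Set.Icc (-(((n:ℝ)+1) * M)) (((n:ℝ)+1) * M))ᶜ = 0 := by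
    intro n
    have h1 := hconvnull (n+1)
    push_cast at h1
    exact h1
  have key : ∀ (k n : ℕ) (μ : Measure ℝ), IsProbabilityMeasure μ →
      μ (Set.Icc (-(((n:ℝ)+1) * M)) (((n:ℝ)+1) * M))ᶜ = 0 →
      |(∫ y, p k y ∂μ) - ∫ y, f y ∂μ| ≤ if n ≤ k then 1 / ((k:ℝ)+1) else 2 * A n + 1 := by
    intro k n μ hμp hμS
    haveI := hμp
    by_cases h : n ≤ k
    · rw [if_pos h]
      refine integral_diff_bound μ hμS (htrig k).continuous hf
        (Cg := A k + 1) (Ch := A n) (fun y _ => hpbound k y) (hfA n) ?_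
      intro y hy
      refine happ k y ?_
      simp only [Set.mem_Icc] at hy ⊢
      have hle : ((n:ℝ)+1) * M ≤ ((k:ℝ)+1) * M := by
        have : (n:ℝ) ≤ k := Nat.cast_le.mpr h
        nlinarith
      exact ⟨by linarith [hy.1], by linarith [hy.2]⟩
    · rw [if_neg h]
      push_neg at h
      refine integral_diff_bound μ hμS (htrig k).continuous hf
        (Cg := A k + 1) (Ch := A n) (fun y _ => hpbound k y) (hfA n) ?_
      intro y hy
      have h1 := hpbound k y
      have h2 := hfA n y hy
      have h3 := hAmono k n h.le
      have h4 : |p k y - f y| ≤ |p k y| + |f y| := by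
        rw [sub_eq_add_neg]
        exact (abs_add_le _ _).trans_eq (by rw [abs_neg])
      linarith
  have master : ∀ (k : ℕ) (μ : ℕ → Measure ℝ), (∀ n, IsProbabilityMeasure (μ n)) →
      (∀ n, (μ n) (Set.Icc (-(((n:ℝ)+1) * M)) (((n:ℝ)+1) * M))ᶜ = 0) →
      |(∑' n, c n * ∫ y, p k y ∂(μ n)) - ∑' n, c n * ∫ y, f y ∂(μ n)|
        ≤ 1/((k:ℝ)+1) * (∑' n, c n) + ∑' j, e (j + (k+1)) := by
    intro k μ hμp hμS
    refine series_bound _ _ c e k _ he0 hcs hes ?_ ?_ ?_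
    · refine Summable.of_norm_bounded (g := fun n => c n * (A k + 1)) (hcs.mul_right _) fun n => ?_
      haveI := hμp n
      rw [Real.norm_eq_abs, abs_mul, abs_of_nonneg (hc0 n)]
      exact mul_le_mul_of_nonneg_left (abs_integral_le (μ n) (hμS n) (htrig k).continuous
        (fun y _ => hpbound k y)) (hc0 n)
    · refine Summable.of_norm_bounded (g := fun n => c n * A n) hcAs fun n => ?_
      haveI := hμp n
      rw [Real.norm_eq_abs, abs_mul, abs_of_nonneg (hc0 n)]
      exact mul_le_mul_of_nonneg_left (abs_integral_le (μ n) (hμS n) hf (hfA n)) (hc0 n)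
    · intro n
      haveI := hμp n
      have hk := key k n (μ n) (hμp n) (hμS n)
      rw [← mul_sub, abs_mul, abs_of_nonneg (hc0 n)]
      by_cases h : n ≤ k
      · rw [if_pos h] at hk ⊢
        have := mul_le_mul_of_nonneg_left hk (hc0 n)
        calc c n * |(∫ y, p k y ∂(μ n)) - ∫ y, f y ∂(μ n)| ≤ c n * (1/((k:ℝ)+1)) := this
          _ = 1/((k:ℝ)+1) * c n + 0 := by ring
      · rw [if_neg h] at hk ⊢
        have h1 : c n * |(∫ y, p k y ∂(μ n)) - ∫ y, f y ∂(μ n)| ≤ e n := by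
          simp only [hedef]
          exact mul_le_mul_of_nonneg_left hk (hc0 n)
        have h2 : 0 ≤ 1/((k:ℝ)+1) * c n := mul_nonneg (by positivity) (hc0 n)
        linarith
  set δ : ℕ → ℝ := fun k => 1/((k:ℝ)+1) * (∑' n, c n) + ∑' j, e (j + (k+1)) with hδdef
  have hδ0 : Tendsto δ atTop (nhds 0) := by
    have h1 : Tendsto (fun k : ℕ => 1/((k:ℝ)+1) * (∑' n, c n)) atTop
        (nhds (0 * (∑' n, c n))) :=
      tendsto_one_div_add_atTop_nhds_zero_nat.mul_const _
    have h2 : Tendsto (fun k : ℕ => ∑' j, e (j + (k+1))) atTop (nhds 0) :=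
      (tendsto_sum_nat_add e).comp (tendsto_add_atTop_nat 1)
    have h3 := h1.add h2
    simp only [zero_mul, zero_add] at h3
    exact h3
  have hFb : ∀ k, ∀ x ∈ msupp ρ,
      |meanFitnessAt (p k) l ρ x - meanFitnessAt f l ρ x| ≤ δ k := by
    intro k x hx
    have h1 := master k (fun n => (Measure.dirac x).conv (convPow ρ n))
      (fun n => by
        haveI := convPow_isProb ρ hρ n
        infer_instance)
      (fun n => hSnull n x hx)
    simpa [meanFitnessAt, hcdef, hδdef] using h1
  have hGb : ∀ k, |meanFitness (p k) l ρ - meanFitness f l ρ| ≤ δ k := by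
    intro k
    have h1 := master k (fun n => convPow ρ (n+1))
      (fun n => convPow_isProb ρ hρ (n+1)) hGnull
    simpa [meanFitness, hcdef, hδdef] using h1
  refine ⟨p, htrig, ?_, ?_⟩
  · rw [Metric.tendstoUniformlyOn_iff]
    intro ε hε
    filter_upwards [hδ0.eventually (gt_mem_nhds hε)] with k hk x hx
    rw [Real.dist_eq]
    calc |meanFitnessAt f l ρ x - meanFitnessAt (p k) l ρ x|
        = |meanFitnessAt (p k) l ρ x - meanFitnessAt f l ρ x| := abs_sub_comm _ _
      _ ≤ δ k := hFb k x hx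
      _ < ε := hk
  · rw [tendsto_iff_dist_tendsto_zero]
    refine squeeze_zero (fun k => dist_nonneg) (fun k => ?_) hδ0
    rw [Real.dist_eq]
    exact hGb k
end

section
/- Let λ ≥ 0 and let ρ₀ be a compactly supported probability measure on [0, ∞) with ∫ x dρ₀ > 0. Define the iterates ρ_{t+1} = A(ρ_t) for t ∈ ℕ, and set x₀ = sup(supp ρ₀). Then ρ_t → δ_{x₀} weakly as t → ∞ (i.e. ∫ φ dρ_t → φ(x₀) for every bounded continuous φ : ℝ → ℝ), and the means x̄_t = ∫ x dρ_t form a nondecreasing sequence converging to x₀. In other words, the best genotype is always selected in the limit, for every mean occupancy λ. -/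
open MeasureTheory Filter

/-- The retardation factor `g(λ) = (1 - e^{-λ})/λ` (with the convention `g(0) = 1`). -/
noncomputable def gFactor (l : ℝ) : ℝ := if l = 0 then 1 else (1 - Real.exp (-l)) / l

/-- The selection update operator: `A(ρ)` is the measure with density
`x ↦ 1 - g(λ) + g(λ)·x/x̄` with respect to `ρ`, where `x̄ = ∫ x dρ`. -/
noncomputable def updateA (l : ℝ) (ρ : Measure ℝ) : Measure ℝ :=
  ρ.withDensity (fun x =>
    ENNReal.ofReal (1 - gFactor l + gFactor l * x / ∫ y, y ∂ρ))

lemma msupp_closed (μ : Measure ℝ) : IsClosed (msupp μ) := by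
  rw [← isOpen_compl_iff, isOpen_iff_mem_nhds]
  intro x hx
  simp only [msupp, Set.mem_compl_iff, Set.mem_setOf_eq, not_forall, not_not] at hx
  obtain ⟨U, hU, hU0⟩ := hx
  obtain ⟨V, hVU, hVopen, hxV⟩ := mem_nhds_iff.mp hU
  filter_upwards [hVopen.mem_nhds hxV] with y hy
  simp only [msupp, Set.mem_compl_iff, Set.mem_setOf_eq, not_forall, not_not]
  exact ⟨V, hVopen.mem_nhds hy, measure_mono_null hVU hU0⟩

lemma msupp_compl_null (μ : Measure ℝ) : μ (msupp μ)ᶜ = 0 := by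
  apply measure_null_of_locally_null
  intro x hx
  simp only [msupp, Set.mem_compl_iff, Set.mem_setOf_eq, not_forall, not_not] at hx
  obtain ⟨U, hU, hU0⟩ := hx
  exact ⟨U, mem_nhdsWithin_of_mem_nhds hU, hU0⟩

lemma msupp_subset_of_null_compl {μ : Measure ℝ} {K : Set ℝ} (hKc : IsClosed K)
    (h : μ Kᶜ = 0) : msupp μ ⊆ K := by
  intro x hx
  by_contra hxK
  exact hx Kᶜ (hKc.isOpen_compl.mem_nhds hxK) h

lemma msupp_nonempty (μ : Measure ℝ) [IsProbabilityMeasure μ] : (msupp μ).Nonempty := by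
  rw [Set.nonempty_iff_ne_empty]
  intro h
  have := msupp_compl_null μ
  rw [h, Set.compl_empty] at this
  simp [measure_univ] at this

lemma ae_mem_Icc {μ : Measure ℝ} {x₀ : ℝ} (h : μ (Set.Icc 0 x₀)ᶜ = 0) :
    ∀ᵐ x ∂μ, x ∈ Set.Icc 0 x₀ := by
  rw [ae_iff]; exact h

lemma integrable_of_ae_bound {μ : Measure ℝ} [IsFiniteMeasure μ] {f : ℝ → ℝ}
    (hf : AEStronglyMeasurable f μ) {C : ℝ} (h : ∀ᵐ x ∂μ, |f x| ≤ C) : Integrable f μ :=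
  Integrable.mono' (integrable_const C) hf (by simpa [Real.norm_eq_abs] using h)

lemma gFactor_pos' {l : ℝ} (hl : 0 ≤ l) : 0 < gFactor l := by
  unfold gFactor
  split_ifs with h
  · norm_num
  · have hl' : 0 < l := lt_of_le_of_ne hl (Ne.symm h)
    apply div_pos _ hl'
    have : Real.exp (-l) < 1 := by rw [Real.exp_lt_one_iff]; linarith
    linarith

lemma gFactor_le_one' {l : ℝ} (hl : 0 ≤ l) : gFactor l ≤ 1 := by
  unfold gFactor
  split_ifs with h
  · norm_num
  · have hl' : 0 < l := lt_of_le_of_ne hl (Ne.symm h)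
    rw [div_le_one hl']
    have := Real.add_one_le_exp (-l)
    linarith

lemma integrable_id' {μ : Measure ℝ} [IsProbabilityMeasure μ] {x₀ : ℝ}
    (hsupp : μ (Set.Icc 0 x₀)ᶜ = 0) : Integrable (fun x : ℝ => x) μ := by
  apply integrable_of_ae_bound measurable_id.aestronglyMeasurable (C := |x₀|)
  filter_upwards [ae_mem_Icc hsupp] with x hx
  rw [abs_le]
  simp only [id]
  exact ⟨by have := hx.1; have := abs_nonneg x₀; linarith,
    le_trans hx.2 (le_abs_self _)⟩

lemma integrable_sq' {μ : Measure ℝ} [IsProbabilityMeasure μ] {x₀ : ℝ}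
    (hsupp : μ (Set.Icc 0 x₀)ᶜ = 0) : Integrable (fun x : ℝ => x ^ 2) μ := by
  apply integrable_of_ae_bound (by fun_prop) (C := x₀ ^ 2)
  filter_upwards [ae_mem_Icc hsupp] with x hx
  rw [abs_le]
  exact ⟨by nlinarith [sq_nonneg x, sq_nonneg x₀], by nlinarith [hx.1, hx.2]⟩

lemma sq_mean_le_mean_sq {μ : Measure ℝ} [IsProbabilityMeasure μ] {x₀ : ℝ}
    (hsupp : μ (Set.Icc 0 x₀)ᶜ = 0) : (∫ x, x ∂μ) ^ 2 ≤ ∫ x, x ^ 2 ∂μ := by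
  set m := ∫ x, x ∂μ with hm
  have h1 : Integrable (fun x : ℝ => x) μ := integrable_id' hsupp
  have h2 : Integrable (fun x : ℝ => x ^ 2) μ := integrable_sq' hsupp
  have h0 : (0:ℝ) ≤ ∫ x, (x - m) ^ 2 ∂μ := integral_nonneg fun x => sq_nonneg _
  have heq : ∫ x, (x - m) ^ 2 ∂μ = (∫ x, x ^ 2 ∂μ) - m ^ 2 := by
    have he : (fun x : ℝ => (x - m) ^ 2) = fun x => x ^ 2 + ((-2 * m) * x + m ^ 2) := by
      funext x; ring
    have hg1 : Integrable (fun x : ℝ => (-2 * m) * x) μ := h1.const_mul _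
    have hg : Integrable (fun x : ℝ => (-2 * m) * x + m ^ 2) μ := hg1.add (integrable_const _)
    rw [he, integral_add h2 hg, integral_add hg1 (integrable_const _), integral_const_mul,
      integral_const]
    simp [measure_univ, ← hm]
    ring
  linarith

lemma updateA_eq {l : ℝ} (μ : Measure ℝ) :
    updateA l μ = μ.withDensity
      (fun x => ENNReal.ofReal (1 - gFactor l + gFactor l * x / ∫ y, y ∂μ)) := rfl

lemma w_nonneg_ae {l : ℝ} (hl : 0 ≤ l) {x₀ : ℝ} {μ : Measure ℝ}
    (hsupp : μ (Set.Icc 0 x₀)ᶜ = 0) (hm : 0 < ∫ x, x ∂μ) :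
    ∀ᵐ x ∂μ, 0 ≤ 1 - gFactor l + gFactor l * x / ∫ y, y ∂μ := by
  filter_upwards [ae_mem_Icc hsupp] with x hx
  have h1 := gFactor_le_one' hl
  have h2 := gFactor_pos' hl
  have : 0 ≤ gFactor l * x / ∫ y, y ∂μ :=
    div_nonneg (mul_nonneg h2.le hx.1) hm.le
  linarith

lemma w_integrable {l : ℝ} {x₀ : ℝ} {μ : Measure ℝ} [IsProbabilityMeasure μ]
    (hsupp : μ (Set.Icc 0 x₀)ᶜ = 0) :
    Integrable (fun x => 1 - gFactor l + gFactor l * x / ∫ y, y ∂μ) μ := by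
  have he : (fun x => 1 - gFactor l + gFactor l * x / ∫ y, y ∂μ)
      = fun x => (1 - gFactor l) + (gFactor l / ∫ y, y ∂μ) * x := by
    funext x; ring
  rw [he]
  exact (integrable_const _).add ((integrable_id' hsupp).const_mul _)

lemma w_integral_one {l : ℝ} {x₀ : ℝ} {μ : Measure ℝ} [IsProbabilityMeasure μ]
    (hsupp : μ (Set.Icc 0 x₀)ᶜ = 0) (hm : 0 < ∫ x, x ∂μ) :
    ∫ x, (1 - gFactor l + gFactor l * x / ∫ y, y ∂μ) ∂μ = 1 := by
  have he : (fun x => 1 - gFactor l + gFactor l * x / ∫ y, y ∂μ)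
      = fun x => (1 - gFactor l) + (gFactor l / ∫ y, y ∂μ) * x := by
    funext x; ring
  rw [he, integral_add (integrable_const _) ((integrable_id' hsupp).const_mul _),
    integral_const, integral_const_mul]
  simp [measure_univ]
  field_simp
  ring

lemma updateA_isProb {l : ℝ} (hl : 0 ≤ l) {x₀ : ℝ} {μ : Measure ℝ} [IsProbabilityMeasure μ]
    (hsupp : μ (Set.Icc 0 x₀)ᶜ = 0) (hm : 0 < ∫ x, x ∂μ) :
    IsProbabilityMeasure (updateA l μ) := by
  constructor
  rw [updateA_eq, withDensity_apply _ MeasurableSet.univ, Measure.restrict_univ,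
    ← ofReal_integral_eq_lintegral_ofReal (w_integrable hsupp) (w_nonneg_ae hl hsupp hm),
    w_integral_one hsupp hm]
  simp

lemma updateA_compl_null {l : ℝ} {x₀ : ℝ} {μ : Measure ℝ}
    (hsupp : μ (Set.Icc 0 x₀)ᶜ = 0) : (updateA l μ) (Set.Icc 0 x₀)ᶜ = 0 :=
  (withDensity_absolutelyContinuous μ _) hsupp

lemma updateA_mean {l : ℝ} (hl : 0 ≤ l) {x₀ : ℝ} {μ : Measure ℝ} [IsProbabilityMeasure μ]
    (hsupp : μ (Set.Icc 0 x₀)ᶜ = 0) (hm : 0 < ∫ x, x ∂μ) :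
    ∫ x, x ∂(updateA l μ) = (1 - gFactor l) * (∫ x, x ∂μ)
      + (gFactor l / ∫ x, x ∂μ) * ∫ x, x ^ 2 ∂μ := by
  set g := gFactor l with hg
  set m := ∫ x, x ∂μ with hmdef
  have hwmeas : Measurable (fun x : ℝ => (1 - g + g * x / m).toNNReal) := by fun_prop
  have h1 : ∫ x, x ∂(updateA l μ) = ∫ x, (1 - g + g * x / m).toNNReal • x ∂μ := by
    rw [updateA_eq]
    exact integral_withDensity_eq_integral_smul hwmeas _
  rw [h1]
  have h2 : ∫ x, (1 - g + g * x / m).toNNReal • x ∂μ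
      = ∫ x, ((1 - g) * x + (g / m) * x ^ 2) ∂μ := by
    apply integral_congr_ae
    filter_upwards [w_nonneg_ae hl hsupp hm] with x hx
    rw [NNReal.smul_def, Real.coe_toNNReal _ hx, smul_eq_mul]
    ring
  rw [h2, integral_add ((integrable_id' hsupp).const_mul _)
    ((integrable_sq' hsupp).const_mul _), integral_const_mul, integral_const_mul]

lemma updateA_mean_mono {l : ℝ} (hl : 0 ≤ l) {x₀ : ℝ} {μ : Measure ℝ} [IsProbabilityMeasure μ]
    (hsupp : μ (Set.Icc 0 x₀)ᶜ = 0) (hm : 0 < ∫ x, x ∂μ) :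
    ∫ x, x ∂μ ≤ ∫ x, x ∂(updateA l μ) := by
  rw [updateA_mean hl hsupp hm]
  have h1 := sq_mean_le_mean_sq hsupp
  have h2 := gFactor_pos' hl
  have h3 := gFactor_le_one' hl
  have h4 : 0 < gFactor l / ∫ x, x ∂μ := div_pos h2 hm
  have h5 : (gFactor l / ∫ x, x ∂μ) * (∫ x, x ∂μ) ^ 2 = gFactor l * ∫ x, x ∂μ := by
    field_simp
  have h6 := mul_le_mul_of_nonneg_left h1 h4.le
  nlinarith

lemma mean_le_top {x₀ : ℝ} {μ : Measure ℝ} [IsProbabilityMeasure μ]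
    (hsupp : μ (Set.Icc 0 x₀)ᶜ = 0) : ∫ x, x ∂μ ≤ x₀ := by
  have := integral_mono_ae (integrable_id' hsupp) (integrable_const x₀)
    (by filter_upwards [ae_mem_Icc hsupp] with x hx using hx.2)
  simpa [measure_univ] using this

lemma updateA_set_le {l : ℝ} {x₀ : ℝ} {μ : Measure ℝ}
    (hsupp : μ (Set.Icc 0 x₀)ᶜ = 0) {B : Set ℝ} (hB : MeasurableSet B) {v : ℝ}
    (hv : ∀ x ∈ Set.Icc 0 x₀, x ∈ B →
      1 - gFactor l + gFactor l * x / (∫ y, y ∂μ) ≤ v) :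
    (updateA l μ) B ≤ ENNReal.ofReal v * μ B := by
  rw [updateA_eq, withDensity_apply _ hB]
  calc ∫⁻ x in B, ENNReal.ofReal (1 - gFactor l + gFactor l * x / ∫ y, y ∂μ) ∂μ
      ≤ ∫⁻ _ in B, ENNReal.ofReal v ∂μ := by
        apply lintegral_mono_ae
        filter_upwards [ae_restrict_of_ae (ae_mem_Icc hsupp), ae_restrict_mem hB]
          with x h1 h2
        exact ENNReal.ofReal_le_ofReal (hv x h1 h2)
    _ = ENNReal.ofReal v * μ B := setLIntegral_const _ _

lemma updateA_set_ge {l : ℝ} {x₀ : ℝ} {μ : Measure ℝ}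
    (hsupp : μ (Set.Icc 0 x₀)ᶜ = 0) {B : Set ℝ} (hB : MeasurableSet B) {v : ℝ}
    (hv : ∀ x ∈ Set.Icc 0 x₀, x ∈ B →
      v ≤ 1 - gFactor l + gFactor l * x / (∫ y, y ∂μ)) :
    ENNReal.ofReal v * μ B ≤ (updateA l μ) B := by
  rw [updateA_eq, withDensity_apply _ hB]
  calc ENNReal.ofReal v * μ B = ∫⁻ _ in B, ENNReal.ofReal v ∂μ :=
        (setLIntegral_const _ _).symm
    _ ≤ ∫⁻ x in B, ENNReal.ofReal (1 - gFactor l + gFactor l * x / ∫ y, y ∂μ) ∂μ := by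
        apply lintegral_mono_ae
        filter_upwards [ae_restrict_of_ae (ae_mem_Icc hsupp), ae_restrict_mem hB]
          with x h1 h2
        exact ENNReal.ofReal_le_ofReal (hv x h1 h2)

lemma decay_lemma (l : ℝ) (hl : 0 ≤ l) (x₀ : ℝ) (hx₀ : 0 < x₀)
    (ρ : ℕ → Measure ℝ)
    (hprob : ∀ t, IsProbabilityMeasure (ρ t))
    (hsuppt : ∀ t, (ρ t) (Set.Icc 0 x₀)ᶜ = 0)
    (hmpos : ∀ t, 0 < ∫ x, x ∂(ρ t))
    (hstep : ∀ t, ρ (t + 1) = updateA l (ρ t))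
    (δ : ℝ) (hδ : 0 < δ) (hδx : δ < x₀)
    (ha0 : ρ 0 (Set.Ici (x₀ - δ / 2)) ≠ 0) :
    Tendsto (fun t => (ρ t) (Set.Iic (x₀ - δ))) atTop (nhds 0) := by
  set g := gFactor l with hgdef
  have hg : 0 < g := gFactor_pos' hl
  have hg1 : g ≤ 1 := gFactor_le_one' hl
  set ε : ℝ := δ / 2 with hεdef
  have hε : 0 < ε := by positivity
  have hεδ : ε < δ := by rw [hεdef]; linarith
  set N' : ℝ := (1 - g) * x₀ + g * (x₀ - δ) with hN'def
  set D' : ℝ := (1 - g) * x₀ + g * (x₀ - ε) with hD'def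
  have hN' : 0 < N' := by
    have : 0 ≤ (1 - g) * x₀ := mul_nonneg (by linarith) hx₀.le
    have : 0 < g * (x₀ - δ) := mul_pos hg (by linarith)
    nlinarith
  have hD' : 0 < D' := by
    have : 0 ≤ (1 - g) * x₀ := mul_nonneg (by linarith) hx₀.le
    have : 0 < g * (x₀ - ε) := mul_pos hg (by linarith)
    nlinarith
  set θ : ℝ := N' / D' with hθdef
  have hθ0 : 0 ≤ θ := div_nonneg hN'.le hD'.le
  have hθ1 : θ < 1 := by
    rw [hθdef, div_lt_one hD']
    have : 0 < g * (δ - ε) := mul_pos hg (by linarith)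
    nlinarith
  -- per-step mean bounds
  have hmle : ∀ t, ∫ x, x ∂(ρ t) ≤ x₀ := fun t => by
    haveI := hprob t; exact mean_le_top (hsuppt t)
  -- the key real inequality
  have hineq : ∀ t, (1 - g + g * (x₀ - δ) / ∫ x, x ∂(ρ t))
      ≤ θ * (1 - g + g * (x₀ - ε) / ∫ x, x ∂(ρ t)) := by
    intro t
    set m : ℝ := ∫ x, x ∂(ρ t) with hmdef
    have hm : 0 < m := hmpos t
    have hmx : m ≤ x₀ := hmle t
    have hP : (1 - g + g * (x₀ - δ) / m) = ((1 - g) * m + g * (x₀ - δ)) / m := by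
      field_simp
    have hQ : (1 - g + g * (x₀ - ε) / m) = ((1 - g) * m + g * (x₀ - ε)) / m := by
      field_simp
    rw [hP, hQ, hθdef]
    rw [div_mul_div_comm, div_le_div_iff₀ hm (by positivity), hN'def, hD'def]
    -- polynomial inequality
    have key : ((1 - g) * m + g * (x₀ - δ)) * ((1 - g) * x₀ + g * (x₀ - ε))
        ≤ ((1 - g) * x₀ + g * (x₀ - δ)) * ((1 - g) * m + g * (x₀ - ε)) := by
      nlinarith [mul_nonneg (mul_nonneg (mul_nonneg hg.le (by linarith : (0:ℝ) ≤ 1 - g)) hε.le)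
        (by linarith : (0:ℝ) ≤ x₀ - m)]
    nlinarith [mul_le_mul_of_nonneg_right key hm.le]
  have hu : ∀ t, 0 < 1 - g + g * (x₀ - ε) / ∫ x, x ∂(ρ t) := by
    intro t
    have : 0 < g * (x₀ - ε) / ∫ x, x ∂(ρ t) :=
      div_pos (mul_pos hg (by linarith)) (hmpos t)
    linarith
  set B : Set ℝ := Set.Iic (x₀ - δ) with hBdef
  set A : Set ℝ := Set.Ici (x₀ - ε) with hAdef
  have hBle : ∀ t, (ρ (t + 1)) B ≤
      ENNReal.ofReal (1 - g + g * (x₀ - δ) / ∫ x, x ∂(ρ t)) * (ρ t) B := by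
    intro t
    rw [hstep t]
    apply updateA_set_le (hsuppt t) measurableSet_Iic
    intro x hx hxB
    have hm := hmpos t
    have h1 : g * x / (∫ y, y ∂(ρ t)) ≤ g * (x₀ - δ) / ∫ y, y ∂(ρ t) := by
      gcongr
      exact hxB
    linarith
  have hAge : ∀ t, ENNReal.ofReal (1 - g + g * (x₀ - ε) / ∫ x, x ∂(ρ t)) * (ρ t) A
      ≤ (ρ (t + 1)) A := by
    intro t
    rw [hstep t]
    apply updateA_set_ge (hsuppt t) measurableSet_Ici
    intro x hx hxA
    have hm := hmpos t
    have h1 : g * (x₀ - ε) / (∫ y, y ∂(ρ t)) ≤ g * x / ∫ y, y ∂(ρ t) := by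
      gcongr
      exact hxA
    linarith
  -- main induction in ℝ≥0∞
  have main : ∀ t, (ρ t) B * (ρ 0) A ≤ (ENNReal.ofReal θ) ^ t * ((ρ 0) B * (ρ t) A) := by
    intro t
    induction t with
    | zero => simp
    | succ t ih =>
      calc (ρ (t + 1)) B * (ρ 0) A
          ≤ (ENNReal.ofReal (1 - g + g * (x₀ - δ) / ∫ x, x ∂(ρ t)) * (ρ t) B) * (ρ 0) A :=
            mul_le_mul_left (hBle t) _
        _ = ENNReal.ofReal (1 - g + g * (x₀ - δ) / ∫ x, x ∂(ρ t)) * ((ρ t) B * (ρ 0) A) := by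
            ring
        _ ≤ ENNReal.ofReal (1 - g + g * (x₀ - δ) / ∫ x, x ∂(ρ t)) *
              ((ENNReal.ofReal θ) ^ t * ((ρ 0) B * (ρ t) A)) := mul_le_mul_right ih _
        _ ≤ (ENNReal.ofReal θ * ENNReal.ofReal (1 - g + g * (x₀ - ε) / ∫ x, x ∂(ρ t))) *
              ((ENNReal.ofReal θ) ^ t * ((ρ 0) B * (ρ t) A)) := by
            apply mul_le_mul_left
            rw [← ENNReal.ofReal_mul hθ0]
            exact ENNReal.ofReal_le_ofReal (hineq t)
        _ = (ENNReal.ofReal θ) ^ (t + 1) *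
              ((ρ 0) B * (ENNReal.ofReal (1 - g + g * (x₀ - ε) / ∫ x, x ∂(ρ t)) * (ρ t) A)) := by
            ring
        _ ≤ (ENNReal.ofReal θ) ^ (t + 1) * ((ρ 0) B * (ρ (t + 1)) A) :=
            mul_le_mul_right (mul_le_mul_right (hAge t) _) _
  have hbound : ∀ t, (ρ t) B ≤ (ENNReal.ofReal θ) ^ t / (ρ 0) A := by
    intro t
    rw [ENNReal.le_div_iff_mul_le (Or.inl ha0) (Or.inl (measure_ne_top _ _))]
    calc (ρ t) B * (ρ 0) A ≤ (ENNReal.ofReal θ) ^ t * ((ρ 0) B * (ρ t) A) := main t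
      _ ≤ (ENNReal.ofReal θ) ^ t * (1 * 1) := by
          haveI := hprob 0; haveI := hprob t
          exact mul_le_mul_right (mul_le_mul' prob_le_one prob_le_one) _
      _ = (ENNReal.ofReal θ) ^ t := by rw [mul_one, mul_one]
  have hθen : ENNReal.ofReal θ < 1 := by
    rw [← ENNReal.ofReal_one]
    exact ENNReal.ofReal_lt_ofReal_iff_of_nonneg hθ0 |>.mpr hθ1
  have h1 : Tendsto (fun t : ℕ => (ENNReal.ofReal θ) ^ t) atTop (nhds 0) :=
    ENNReal.tendsto_pow_atTop_nhds_zero_of_lt_one hθen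
  have h2 : Tendsto (fun t : ℕ => (ENNReal.ofReal θ) ^ t / (ρ 0) A) atTop (nhds 0) := by
    have h3 := ENNReal.Tendsto.div_const (b := (ρ 0) A) h1 (Or.inr ha0)
    simpa using h3
  exact tendsto_of_tendsto_of_tendsto_of_le_of_le tendsto_const_nhds h2
    (fun t => zero_le) hbound


/-- The best genotype is always selected in the limit, for every mean occupancy. -/
theorem best_genotype_always_selected
    (l : ℝ) (hl : 0 ≤ l)
    (ρ₀ : Measure ℝ) (hρ₀ : IsProbabilityMeasure ρ₀)
    (K : Set ℝ) (hK : IsCompact K) (hsupp : ρ₀ Kᶜ = 0)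
    (hpos : ρ₀ (Set.Iio 0) = 0)
    (hmean : 0 < ∫ x, x ∂ρ₀)
    (ρ : ℕ → Measure ℝ) (h0 : ρ 0 = ρ₀)
    (hstep : ∀ t : ℕ, ρ (t + 1) = updateA l (ρ t)) :
    (∀ φ : ℝ → ℝ, Continuous φ → (∃ C : ℝ, ∀ x, |φ x| ≤ C) →
      Tendsto (fun t => ∫ x, φ x ∂(ρ t)) atTop (nhds (φ (sSup (msupp ρ₀))))) ∧
    Monotone (fun t => ∫ x, x ∂(ρ t)) ∧
    Tendsto (fun t => ∫ x, x ∂(ρ t)) atTop (nhds (sSup (msupp ρ₀))) := by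
  have hKc : IsClosed K := hK.isClosed
  have hsub : msupp ρ₀ ⊆ K := msupp_subset_of_null_compl hKc hsupp
  have hne : (msupp ρ₀).Nonempty := msupp_nonempty ρ₀
  have hbdd : BddAbove (msupp ρ₀) := hK.bddAbove.mono hsub
  set x₀ := sSup (msupp ρ₀) with hx₀def
  have hx₀mem : x₀ ∈ msupp ρ₀ := (msupp_closed ρ₀).csSup_mem hne hbdd
  have hIoi : ρ₀ (Set.Ioi x₀) = 0 := by
    apply measure_mono_null _ (msupp_compl_null ρ₀)
    intro y hy hymem
    exact absurd (le_csSup hbdd hymem) (not_le.mpr hy)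
  have hS : ρ₀ (Set.Icc 0 x₀)ᶜ = 0 := by
    apply measure_mono_null _ (measure_union_null hpos hIoi)
    intro x hx
    simp only [Set.mem_compl_iff, Set.mem_Icc, not_and_or, not_le] at hx
    simpa [Set.mem_union, Set.mem_Iio, Set.mem_Ioi] using hx
  have hx₀pos : 0 < x₀ := lt_of_lt_of_le hmean (mean_le_top hS)
  have inv : ∀ t, IsProbabilityMeasure (ρ t) ∧ (ρ t) (Set.Icc 0 x₀)ᶜ = 0
      ∧ 0 < ∫ x, x ∂(ρ t) := by
    intro t
    induction t with
    | zero => rw [h0]; exact ⟨hρ₀, hS, hmean⟩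
    | succ t ih =>
      haveI := ih.1
      rw [hstep t]
      exact ⟨updateA_isProb hl ih.2.1 ih.2.2, updateA_compl_null ih.2.1,
        lt_of_lt_of_le ih.2.2 (updateA_mean_mono hl ih.2.1 ih.2.2)⟩
  have hmono : Monotone (fun t => ∫ x, x ∂(ρ t)) := by
    apply monotone_nat_of_le_succ
    intro t
    haveI := (inv t).1
    rw [hstep t]
    exact updateA_mean_mono hl (inv t).2.1 (inv t).2.2
  have decay : ∀ δ : ℝ, 0 < δ → δ < x₀ →
      Tendsto (fun t => (ρ t) (Set.Iic (x₀ - δ))) atTop (nhds 0) := by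
    intro δ hδ hδx
    apply decay_lemma l hl x₀ hx₀pos ρ (fun t => (inv t).1) (fun t => (inv t).2.1)
      (fun t => (inv t).2.2) hstep δ hδ hδx
    rw [h0]
    intro h
    exact hx₀mem (Set.Ioi (x₀ - δ / 2)) (isOpen_Ioi.mem_nhds (by simp; linarith))
      (measure_mono_null Set.Ioi_subset_Ici_self h)
  have weak : ∀ φ : ℝ → ℝ, Continuous φ → (∃ C : ℝ, ∀ x, |φ x| ≤ C) →
      Tendsto (fun t => ∫ x, φ x ∂(ρ t)) atTop (nhds (φ x₀)) := by
    rintro φ hφ ⟨C, hC⟩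
    set C' := max C 1 with hC'def
    have hC' : (0:ℝ) < C' := lt_of_lt_of_le one_pos (le_max_right _ _)
    have hCb : ∀ x, |φ x| ≤ C' := fun x => (hC x).trans (le_max_left _ _)
    rw [Metric.tendsto_atTop]
    intro η hη
    obtain ⟨δ, hδpos, hδ⟩ := Metric.continuous_iff.mp hφ x₀ (η / 2) (by linarith)
    set δ₂ := min (δ / 2) (x₀ / 2) with hδ₂def
    have hδ₂pos : 0 < δ₂ := lt_min (by linarith) (by linarith)
    have hδ₂x : δ₂ < x₀ := (min_le_right _ _).trans_lt (by linarith)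
    have hδ₂δ : δ₂ < δ := (min_le_left _ _).trans_lt (by linarith)
    have hdec := decay δ₂ hδ₂pos hδ₂x
    have hdec' : Tendsto (fun t => ((ρ t) (Set.Iic (x₀ - δ₂))).toReal) atTop (nhds 0) := by
      have h := (ENNReal.tendsto_toReal ENNReal.zero_ne_top).comp hdec
      simpa [Function.comp_def] using h
    obtain ⟨N, hN⟩ := (Metric.tendsto_atTop.mp hdec') (η / (4 * C')) (by positivity)
    refine ⟨N, fun t ht => ?_⟩
    haveI := (inv t).1
    set r := ((ρ t) (Set.Iic (x₀ - δ₂))).toReal with hrdef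
    have hr0 : 0 ≤ r := ENNReal.toReal_nonneg
    have hr : r < η / (4 * C') := by
      have h := hN t ht
      rwa [Real.dist_eq, sub_zero, abs_of_nonneg hr0] at h
    have hφint : Integrable φ (ρ t) :=
      integrable_of_ae_bound hφ.aestronglyMeasurable (Eventually.of_forall hCb)
    have hRHSint : Integrable
        (fun x => η / 2 + (2 * C') * Set.indicator (Set.Iic (x₀ - δ₂)) 1 x) (ρ t) :=
      (integrable_const _).add
        (((integrable_const (1:ℝ)).indicator measurableSet_Iic).const_mul _)
    have e1 : ∫ x, φ x ∂(ρ t) - φ x₀ = ∫ x, (φ x - φ x₀) ∂(ρ t) := by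
      rw [integral_sub hφint (integrable_const _), integral_const]
      simp [measure_univ]
    have e3 : ∫ x, |φ x - φ x₀| ∂(ρ t)
        ≤ ∫ x, (η / 2 + (2 * C') * Set.indicator (Set.Iic (x₀ - δ₂)) 1 x) ∂(ρ t) := by
      apply integral_mono_ae (hφint.sub (integrable_const _)).abs hRHSint
      filter_upwards [ae_mem_Icc (inv t).2.1] with x hx
      simp only [Pi.sub_apply]
      by_cases hxB : x ∈ Set.Iic (x₀ - δ₂)
      · rw [Set.indicator_of_mem hxB]
        have h3 := hCb x
        have h4 := hCb x₀
        have h2 : |φ x - φ x₀| ≤ |φ x| + |φ x₀| := by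
          rw [sub_eq_add_neg]
          exact (abs_add_le _ _).trans (by rw [abs_neg])
        simp only [Pi.one_apply]
        linarith
      · rw [Set.indicator_of_notMem hxB]
        simp only [Set.mem_Iic, not_le] at hxB
        have hdist : dist x x₀ < δ := by
          rw [Real.dist_eq]
          have h5 : |x - x₀| ≤ δ₂ := abs_le.mpr ⟨by linarith, by linarith [hx.2, hδ₂pos]⟩
          linarith
        have h6 := hδ x hdist
        rw [Real.dist_eq] at h6
        linarith
    have e4 : ∫ x, (η / 2 + (2 * C') * Set.indicator (Set.Iic (x₀ - δ₂)) 1 x) ∂(ρ t)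
        = η / 2 + 2 * C' * r := by
      have hind : Integrable
          (fun x => (2 * C') * Set.indicator (Set.Iic (x₀ - δ₂)) (1 : ℝ → ℝ) x) (ρ t) :=
        (((integrable_const (1:ℝ)).indicator measurableSet_Iic).const_mul _)
      rw [integral_add (integrable_const _) hind, integral_const, integral_const_mul]
      have : ∫ x, Set.indicator (Set.Iic (x₀ - δ₂)) (1:ℝ → ℝ) x ∂(ρ t) = r := by
        rw [hrdef]
        have := integral_indicator_const (1:ℝ) (measurableSet_Iic (a := x₀ - δ₂)) (μ := ρ t)
        simpa [measureReal_def] using this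
      rw [this]
      simp [measure_univ]
    rw [Real.dist_eq, e1]
    calc |∫ x, (φ x - φ x₀) ∂(ρ t)| ≤ ∫ x, |φ x - φ x₀| ∂(ρ t) := by
          have h7 := norm_integral_le_integral_norm (μ := ρ t) (fun x => φ x - φ x₀)
          simpa [Real.norm_eq_abs] using h7
      _ ≤ η / 2 + 2 * C' * r := le_of_le_of_eq e3 e4
      _ < η / 2 + 2 * C' * (η / (4 * C')) := by
          have := mul_lt_mul_of_pos_left hr (by linarith : (0:ℝ) < 2 * C')
          linarith
      _ = η := by field_simp; ring
  refine ⟨weak, hmono, ?_⟩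
  -- mean convergence via a clamped identity function
  set φc : ℝ → ℝ := fun x => max 0 (min x x₀) with hφcdef
  have hφccont : Continuous φc := continuous_const.max (continuous_id.min continuous_const)
  have hφcbdd : ∃ C : ℝ, ∀ x, |φc x| ≤ C := by
    refine ⟨x₀, fun x => ?_⟩
    rw [abs_of_nonneg (le_max_left _ _)]
    exact max_le hx₀pos.le (min_le_right _ _)
  have hw := weak φc hφccont hφcbdd
  have hφcx₀ : φc x₀ = x₀ := by
    rw [hφcdef]; simp [min_self, max_eq_right hx₀pos.le]
  rw [hφcx₀] at hw
  apply hw.congr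
  intro t
  apply integral_congr_ae
  filter_upwards [ae_mem_Icc (inv t).2.1] with x hx
  rw [hφcdef]
  simp only
  rw [min_eq_left hx.2, max_eq_right hx.1]
end
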